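/- The symmetry of the open-graph prop is natural up to the permutation equivalence: for tuples Γ : m→n and Γ' : m'→n', σ_{n,n'} ∘ (Γ ⊗ Γ') is obtained from (Γ' ⊗ Γ) ∘ σ_{m,m'} by acting with the block permutation matrix [[0, 1_{k'}],[1_k, 0]] on the (C, D, E) components. Concretely: composing Γ ⊗ Γ' (whose B-component is diag(B,B')) with the k=0 tuple having B-matrix the swap [[0,1ₙ],[1_{n'},0]] yields B-component diag(B,B')·swap = swap·diag(B',B), matching the B-component of (Γ' ⊗ Γ) ∘ σ_{m,m'}, while the (C, D, E) components differ exactly by the stated block swap permutation. -/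

import Mathlib

open Matrix

/-- Open-graph tuples over F₂ = ZMod 2. -/
structure OGTuple (μ ν κ : Type) where
  A : Matrix μ μ (ZMod 2)
  B : Matrix μ ν (ZMod 2)
  C : Matrix μ κ (ZMod 2)
  D : Matrix κ ν (ZMod 2)
  E : Matrix κ κ (ZMod 2)

/-- Composition of open-graph tuples (Γ first, then Γ'). -/
def ogComp {μ ν ρ κ κ' : Type} [Fintype ν] (Γ : OGTuple μ ν κ) (Γ' : OGTuple ν ρ κ') :
    OGTuple μ ρ (κ ⊕ κ') where
  A := Γ.A + Γ.B * Γ'.A * Γ.Bᵀ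
  B := Γ.B * Γ'.B
  C := Matrix.fromCols (Γ.C + Γ.B * (Γ'.A + Γ'.Aᵀ) * Γ.Dᵀ) (Γ.B * Γ'.C)
  D := Matrix.fromRows (Γ.D * Γ'.B) Γ'.D
  E := Matrix.fromBlocks (Γ.E + Γ.D * Γ'.A * Γ.Dᵀ) (Γ.D * Γ'.C) 0 Γ'.E

/-- Monoidal (block-diagonal) product of open-graph tuples. -/
def ogTensor {μ ν κ μ' ν' κ' : Type} (Γ : OGTuple μ ν κ) (Γ' : OGTuple μ' ν' κ') :
    OGTuple (μ ⊕ μ') (ν ⊕ ν') (κ ⊕ κ') where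
  A := Matrix.fromBlocks Γ.A 0 0 Γ'.A
  B := Matrix.fromBlocks Γ.B 0 0 Γ'.B
  C := Matrix.fromBlocks Γ.C 0 0 Γ'.C
  D := Matrix.fromBlocks Γ.D 0 0 Γ'.D
  E := Matrix.fromBlocks Γ.E 0 0 Γ'.E

/-- The symmetry `σ_{α,β}`: no internal vertices, B-matrix the block swap
`[[0, 1_α],[1_β, 0]]`. -/
def ogSwap (α β : Type) [DecidableEq α] [DecidableEq β] :
    OGTuple (α ⊕ β) (β ⊕ α) Empty where
  A := 0
  B := Matrix.fromBlocks 0 1 1 0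
  C := 0
  D := 0
  E := 0

/-- the symmetry of the open-graph prop is natural up to the permutation
equivalence: `σ_{n,n'} ∘ (Γ ⊗ Γ')` is obtained from `(Γ' ⊗ Γ) ∘ σ_{m,m'}` by the block swap
permutation on the internal vertices; the A- and B-components agree on the nose (in
particular `diag(B,B')·swap = swap·diag(B',B)`), while the C-, D- and E-components agree
up to the swap `[[0,1_{k'}],[1_k,0]]` of the internal vertex blocks. -/
theorem ogSwap_natural {m n m' n' k k' : ℕ}
    (Γ : OGTuple (Fin m) (Fin n) (Fin k)) (Γ' : OGTuple (Fin m') (Fin n') (Fin k')) :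
    letI lhs := ogComp (ogTensor Γ Γ') (ogSwap (Fin n) (Fin n'))  -- σ_{n,n'} ∘ (Γ ⊗ Γ')
    letI rhs := ogComp (ogSwap (Fin m) (Fin m')) (ogTensor Γ' Γ)  -- (Γ' ⊗ Γ) ∘ σ_{m,m'}
    letI e : (Fin k ⊕ Fin k') ⊕ Empty ≃ Empty ⊕ (Fin k' ⊕ Fin k) :=
      (Equiv.sumEmpty _ _).trans ((Equiv.sumComm _ _).trans (Equiv.emptySum _ _).symm)
    lhs.A = rhs.A ∧ lhs.B = rhs.B ∧
    lhs.C = rhs.C.submatrix id e ∧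
    lhs.D = rhs.D.submatrix e id ∧
    lhs.E = rhs.E.submatrix e e := by
  refine ⟨?_, ?_, ?_, ?_, ?_⟩
  all_goals
    simp only [ogComp, ogTensor, ogSwap, Matrix.fromBlocks_multiply,
      Matrix.fromBlocks_transpose, Matrix.transpose_zero, Matrix.transpose_one,
      Matrix.mul_zero, Matrix.zero_mul, Matrix.mul_one, Matrix.one_mul,
      add_zero, zero_add, Matrix.fromBlocks_zero]
  all_goals try rfl
  all_goals
    ext i j
    all_goals rcases i with i|i
    all_goals try exact i.elim
    all_goals try rcases i with i|i
    all_goals rcases j with j|j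
    all_goals try exact j.elim
    all_goals try rcases j with j|j
    all_goals simp [Matrix.fromBlocks, Matrix.fromCols, Matrix.fromRows, Sum.elim]
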